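/- For any square matrix Λ of the form Λ_{t+1} = Λ_t + Σ_{a∈S_t} z_{ta} z_{ta}ᵀ with Λ_t positive definite, the determinant satisfies det(Λ_{t+1}) ≥ det(Λ_t) · (1 + Σ_{a∈S_t} ‖z_{ta}‖²_{Λ_t⁻¹}). -/

import Mathlib

open Matrix Finset

private lemma aux_one_add_sum_le_prod {ι : Type*} (s : Finset ι) (f : ι → ℝ)
    (h : ∀ i ∈ s, 0 ≤ f i) : 1 + ∑ i ∈ s, f i ≤ ∏ i ∈ s, (1 + f i) := by
  classical
  induction s using Finset.induction with
  | empty => simp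
  | @insert a s hx ih =>
    rw [Finset.sum_insert hx, Finset.prod_insert hx]
    have ha : 0 ≤ f a := h a (Finset.mem_insert_self a s)
    have hs : ∀ i ∈ s, 0 ≤ f i := fun i hi => h i (Finset.mem_insert_of_mem hi)
    have h1 : (0:ℝ) ≤ ∑ i ∈ s, f i := Finset.sum_nonneg hs
    calc 1 + (f a + ∑ i ∈ s, f i) ≤ (1 + f a) * (1 + ∑ i ∈ s, f i) := by nlinarith
      _ ≤ (1 + f a) * ∏ i ∈ s, (1 + f i) := by
          apply mul_le_mul_of_nonneg_left (ih hs); linarith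

private lemma aux_psd_vecMulVec {d : ℕ} (z : Fin d → ℝ) : (vecMulVec z z).PosSemidef := by
  refine Matrix.PosSemidef.of_dotProduct_mulVec_nonneg ?_ ?_
  · ext i j
    simp [conjTranspose_apply, vecMulVec_apply, mul_comm]
  · intro x
    have : star x ⬝ᵥ (vecMulVec z z) *ᵥ x = (z ⬝ᵥ x) * (z ⬝ᵥ x) := by
      simp [dotProduct, mulVec, vecMulVec_apply, Finset.mul_sum, Finset.sum_mul]
      rw [Finset.sum_comm]
      congr 1; ext j; congr 1; ext i; ring
    rw [this]
    exact mul_self_nonneg _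

private lemma aux_det_one_add {d : ℕ} (N : Matrix (Fin d) (Fin d) ℝ) (hN : N.PosSemidef) :
    1 + N.trace ≤ (1 + N).det := by
  classical
  have hH := hN.1
  set U : Matrix (Fin d) (Fin d) ℝ := (hH.eigenvectorUnitary : Matrix (Fin d) (Fin d) ℝ)
  have hU1 : U * star U = 1 := Matrix.mem_unitaryGroup_iff.mp hH.eigenvectorUnitary.2
  have hU2 : star U * U = 1 := Matrix.mem_unitaryGroup_iff'.mp hH.eigenvectorUnitary.2
  have spec : N = U * diagonal (RCLike.ofReal ∘ hH.eigenvalues) * star U := hH.spectral_theorem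
  set D : Matrix (Fin d) (Fin d) ℝ := diagonal (RCLike.ofReal ∘ hH.eigenvalues)
  have hkey : 1 + N = U * (1 + D) * star U := by
    rw [mul_add, add_mul, mul_one, ← spec, hU1]
  have hdet : (1 + N).det = ∏ i, (1 + hH.eigenvalues i) := by
    rw [hkey, det_mul, det_mul, mul_comm, ← mul_assoc, ← det_mul, hU2, det_one, one_mul]
    have : (1 : Matrix (Fin d) (Fin d) ℝ) + D
        = diagonal (fun i => 1 + hH.eigenvalues i) := by
      rw [← diagonal_one, diagonal_add]
      rfl
    rw [this, det_diagonal]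
  have htr : N.trace = ∑ i, hH.eigenvalues i := by
    conv_lhs => rw [spec]
    rw [trace_mul_comm, ← mul_assoc, hU2, one_mul]
    simp [D, trace_diagonal]
  rw [hdet, htr]
  exact aux_one_add_sum_le_prod Finset.univ _ (fun i _ => hN.eigenvalues_nonneg i)

private lemma aux_trace_mul_vecMulVec {d : ℕ} (A : Matrix (Fin d) (Fin d) ℝ)
    (u v : Fin d → ℝ) : (A * vecMulVec u v).trace = v ⬝ᵥ A *ᵥ u := by
  simp [Matrix.trace, Matrix.diag, mul_apply, vecMulVec_apply, dotProduct, mulVec,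
    Finset.mul_sum]
  congr 1; ext i; congr 1; ext j; ring

/-- Multi-rank-one determinant update inequality. -/
theorem stmt_2 (d : ℕ) (ι : Type*) (S : Finset ι) (z : ι → Fin d → ℝ)
    (Λ : Matrix (Fin d) (Fin d) ℝ) (hΛ : Λ.PosDef) :
    Λ.det * (1 + ∑ a ∈ S, z a ⬝ᵥ (Λ⁻¹ *ᵥ z a)) ≤
      (Λ + ∑ a ∈ S, vecMulVec (z a) (z a)).det := by
  classical
  set M : Matrix (Fin d) (Fin d) ℝ := ∑ a ∈ S, vecMulVec (z a) (z a) with hMdef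
  have hM : M.PosSemidef :=
    Finset.sum_induction _ Matrix.PosSemidef (fun a b ha hb => ha.add hb)
      Matrix.PosSemidef.zero (fun a _ => aux_psd_vecMulVec (z a))
  set B : Matrix (Fin d) (Fin d) ℝ := (open scoped MatrixOrder in CFC.sqrt Λ) with hBdef
  have hB : B.PosSemidef :=
    (open scoped MatrixOrder in Matrix.nonneg_iff_posSemidef.mp (CFC.sqrt_nonneg Λ))
  have hBB : B * B = Λ :=
    (open scoped MatrixOrder in CFC.sqrt_mul_sqrt_self Λ hΛ.posSemidef.nonneg)
  have hdetΛ : 0 < Λ.det := hΛ.det_pos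
  have hdetBB : B.det * B.det = Λ.det := by rw [← det_mul, hBB]
  have hBdet : IsUnit B.det := by
    refine isUnit_iff_ne_zero.mpr fun h => ?_
    rw [h, mul_zero] at hdetBB
    exact hdetΛ.ne' hdetBB.symm
  have hBinv : B * B⁻¹ = 1 := mul_nonsing_inv _ hBdet
  have hinvB : B⁻¹ * B = 1 := nonsing_inv_mul _ hBdet
  have hBsym : (B⁻¹)ᴴ = B⁻¹ := by
    rw [conjTranspose_nonsing_inv, hB.1]
  set N : Matrix (Fin d) (Fin d) ℝ := B⁻¹ * M * B⁻¹ with hNdef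
  have hN : N.PosSemidef := by
    have := hM.mul_mul_conjTranspose_same (B⁻¹)
    rwa [hBsym] at this
  have hkey : Λ + M = B * (1 + N) * B := by
    rw [mul_add, add_mul, mul_one, hBB, hNdef]
    congr 1
    simp only [← Matrix.mul_assoc]
    rw [hBinv, one_mul, Matrix.mul_assoc, hinvB, mul_one]
  have hΛinv : Λ⁻¹ = B⁻¹ * B⁻¹ := by rw [← hBB, Matrix.mul_inv_rev]
  have htrace : N.trace = ∑ a ∈ S, z a ⬝ᵥ (Λ⁻¹ *ᵥ z a) := by
    rw [hNdef, trace_mul_cycle, ← hΛinv, hMdef, Finset.mul_sum, trace_sum]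
    exact Finset.sum_congr rfl fun a _ => aux_trace_mul_vecMulVec _ _ _
  calc Λ.det * (1 + ∑ a ∈ S, z a ⬝ᵥ (Λ⁻¹ *ᵥ z a)) = Λ.det * (1 + N.trace) := by
        rw [htrace]
    _ ≤ Λ.det * (1 + N).det :=
        mul_le_mul_of_nonneg_left (aux_det_one_add N hN) hdetΛ.le
    _ = (B * (1 + N) * B).det := by
        rw [det_mul, det_mul, ← hdetBB]; ring
    _ = (Λ + M).det := by rw [hkey]
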